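/- Define F(z) = z ln z − z (with F(0)=0). With m = pn, m' = qn, a = nq(1−p)^2 r/(r−p), b = n(1−p)(r−1)pq/(r−p), d = n(r−1)^2 p^2 q/(r(r−p)), e = npq/r, and S = LM + LA + LE + 2LB + LD + LT where LM = −rF(n) + 2F(n) − 2F(n−m) − rF(m/r), LA = 2F(n−m) − 2F(n−m−a) − rF(a/r), LE = rF(m/r) − rF((m−e)/r) − rF(e/r), LB = F(n−m−a) − F(n−m−a−b) − r(r−1)F(b/(r(r−1))) + rF((m−e)/r) − rF((m−e−b)/r), LD = 2rF((m−e−b)/r) − 2r(r−1)F(d/(r(r−1))) + rF(d/r) − 2rF((m−e−b−d)/r), LT = rF(n − (m+a+2b+d)/r), then S/n = [−p ln p + (2p−r) ln r + 2(p−1) ln(1−p) + (r−p) ln(r−p)] + [−q ln q + (2q−r) ln r + 2(q−1) ln(1−q) + (r−q) ln(r−q)]. -/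

import Mathlib

set_option maxHeartbeats 2000000 in
theorem S_over_n (n p q : ℝ) (r : ℕ) (hn : 0 < n) (hr : 2 ≤ r)
    (hp0 : 0 < p) (hp1 : p < 1) (hq0 : 0 < q) (hq1 : q < 1) (hpq : p + q < 1)
    (hpr : p < r) (hqr : q < r)
    (F : ℝ → ℝ) (hF : ∀ z, F z = z * Real.log z - z)
    (m m' a b d e : ℝ)
    (hm : m = p * n) (hm' : m' = q * n)
    (ha : a = n * q * (1 - p) ^ 2 * r / (r - p))
    (hb : b = n * (1 - p) * (r - 1) * p * q / (r - p))
    (hd : d = n * (r - 1) ^ 2 * p ^ 2 * q / (r * (r - p)))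
    (he : e = n * p * q / r)
    (LM LA LE LB LD LT S : ℝ)
    (hLM : LM = -(r : ℝ) * F n + 2 * F n - 2 * F (n - m) - r * F (m / r))
    (hLA : LA = 2 * F (n - m) - 2 * F (n - m - a) - r * F (a / r))
    (hLE : LE = r * F (m / r) - r * F ((m - e) / r) - r * F (e / r))
    (hLB : LB = F (n - m - a) - F (n - m - a - b) - r * (r - 1) * F (b / (r * (r - 1)))
      + r * F ((m - e) / r) - r * F ((m - e - b) / r))
    (hLD : LD = 2 * r * F ((m - e - b) / r) - 2 * r * (r - 1) * F (d / (r * (r - 1)))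
      + r * F (d / r) - 2 * r * F ((m - e - b - d) / r))
    (hLT : LT = r * F (n - (m + a + 2 * b + d) / r))
    (hS : S = LM + LA + LE + 2 * LB + LD + LT) :
    S / n =
      (-p * Real.log p + (2 * p - r) * Real.log r + 2 * (p - 1) * Real.log (1 - p)
          + (r - p) * Real.log (r - p)) +
      (-q * Real.log q + (2 * q - r) * Real.log r + 2 * (q - 1) * Real.log (1 - q)
          + (r - q) * Real.log (r - q)) := by
  have hr2 : (2:ℝ) ≤ (r:ℝ) := by exact_mod_cast hr
  have hr0 : (0:ℝ) < (r:ℝ) := by linarith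
  have hr1 : (0:ℝ) < (r:ℝ) - 1 := by linarith
  have h1p : (0:ℝ) < 1 - p := by linarith
  have h1q : (0:ℝ) < 1 - q := by linarith
  have hrp : (0:ℝ) < (r:ℝ) - p := by linarith
  have hrq : (0:ℝ) < (r:ℝ) - q := by linarith
  have hn0 : n ≠ 0 := hn.ne'
  have hr0' : (r:ℝ) ≠ 0 := hr0.ne'
  have hrp0 : (r:ℝ) - p ≠ 0 := hrp.ne'
  -- F value lemmas
  have H1 : F n = n * Real.log n - n := hF n
  have H2 : F (a / r) = (n * q * (1 - p) ^ 2 / ((r:ℝ) - p)) *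
      (Real.log n + Real.log q + 2 * Real.log (1 - p) - Real.log ((r:ℝ) - p))
      - n * q * (1 - p) ^ 2 / ((r:ℝ) - p) := by
    have harg : a / (r:ℝ) = n * q * (1 - p) ^ 2 / ((r:ℝ) - p) := by
      rw [ha]; field_simp
    rw [harg, hF, Real.log_div (by positivity) (by positivity),
      Real.log_mul (by positivity) (by positivity),
      Real.log_mul (by positivity) (by positivity), Real.log_pow]
    push_cast; ring
  have H3 : F ((m - e) / r) = (n * p * ((r:ℝ) - q) / (r:ℝ)^2) *
      (Real.log n + Real.log p + Real.log ((r:ℝ) - q) - 2 * Real.log (r:ℝ))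
      - n * p * ((r:ℝ) - q) / (r:ℝ)^2 := by
    have harg : (m - e) / (r:ℝ) = n * p * ((r:ℝ) - q) / (r:ℝ)^2 := by
      rw [hm, he]; field_simp
    rw [harg, hF, Real.log_div (by positivity) (by positivity),
      Real.log_mul (by positivity) (by positivity),
      Real.log_mul (by positivity) (by positivity), Real.log_pow]
    push_cast; ring
  have H4 : F (e / r) = (n * p * q / (r:ℝ)^2) *
      (Real.log n + Real.log p + Real.log q - 2 * Real.log (r:ℝ))
      - n * p * q / (r:ℝ)^2 := by
    have harg : e / (r:ℝ) = n * p * q / (r:ℝ)^2 := by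
      rw [he]; field_simp
    rw [harg, hF, Real.log_div (by positivity) (by positivity),
      Real.log_mul (by positivity) (by positivity),
      Real.log_mul (by positivity) (by positivity), Real.log_pow]
    push_cast; ring
  have H5 : F (n - m - a - b) = (n * (1 - p) * (1 - q)) *
      (Real.log n + Real.log (1 - p) + Real.log (1 - q)) - n * (1 - p) * (1 - q) := by
    have harg : n - m - a - b = n * (1 - p) * (1 - q) := by
      rw [hm, ha, hb]; field_simp; ring
    rw [harg, hF, Real.log_mul (by positivity) (by positivity),
      Real.log_mul (by positivity) (by positivity)]
  have H6 : F (b / (r * (r - 1))) = (n * (1 - p) * p * q / ((r:ℝ) * ((r:ℝ) - p))) *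
      (Real.log n + Real.log (1 - p) + Real.log p + Real.log q - Real.log (r:ℝ)
        - Real.log ((r:ℝ) - p)) - n * (1 - p) * p * q / ((r:ℝ) * ((r:ℝ) - p)) := by
    have harg : b / ((r:ℝ) * ((r:ℝ) - 1)) = n * (1 - p) * p * q / ((r:ℝ) * ((r:ℝ) - p)) := by
      rw [hb]; field_simp
    rw [harg, hF, Real.log_div (by positivity) (by positivity),
      Real.log_mul (by positivity) (by positivity),
      Real.log_mul (by positivity) (by positivity),
      Real.log_mul (by positivity) (by positivity),
      Real.log_mul (by positivity) (by positivity)]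
    ring
  have H7 : F (d / (r * (r - 1))) = (n * ((r:ℝ) - 1) * p^2 * q / ((r:ℝ)^2 * ((r:ℝ) - p))) *
      (Real.log n + Real.log ((r:ℝ) - 1) + 2 * Real.log p + Real.log q
        - 2 * Real.log (r:ℝ) - Real.log ((r:ℝ) - p))
      - n * ((r:ℝ) - 1) * p^2 * q / ((r:ℝ)^2 * ((r:ℝ) - p)) := by
    have harg : d / ((r:ℝ) * ((r:ℝ) - 1)) =
        n * ((r:ℝ) - 1) * p^2 * q / ((r:ℝ)^2 * ((r:ℝ) - p)) := by
      rw [hd]; field_simp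
    rw [harg, hF, Real.log_div (by positivity) (by positivity),
      Real.log_mul (by positivity) (by positivity),
      Real.log_mul (by positivity) (by positivity),
      Real.log_mul (by positivity) (by positivity),
      Real.log_mul (by positivity) (by positivity),
      Real.log_pow, Real.log_pow]
    push_cast; ring
  have H8 : F (d / r) = (n * ((r:ℝ) - 1)^2 * p^2 * q / ((r:ℝ)^2 * ((r:ℝ) - p))) *
      (Real.log n + 2 * Real.log ((r:ℝ) - 1) + 2 * Real.log p + Real.log q
        - 2 * Real.log (r:ℝ) - Real.log ((r:ℝ) - p))
      - n * ((r:ℝ) - 1)^2 * p^2 * q / ((r:ℝ)^2 * ((r:ℝ) - p)) := by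
    have harg : d / (r:ℝ) = n * ((r:ℝ) - 1)^2 * p^2 * q / ((r:ℝ)^2 * ((r:ℝ) - p)) := by
      rw [hd]; field_simp
    rw [harg, hF, Real.log_div (by positivity) (by positivity),
      Real.log_mul (by positivity) (by positivity),
      Real.log_mul (by positivity) (by positivity),
      Real.log_mul (by positivity) (by positivity),
      Real.log_mul (by positivity) (by positivity),
      Real.log_pow, Real.log_pow, Real.log_pow]
    push_cast; ring
  have H9 : F ((m - e - b - d) / r) = (n * p * (1 - q) / (r:ℝ)) *
      (Real.log n + Real.log p + Real.log (1 - q) - Real.log (r:ℝ))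
      - n * p * (1 - q) / (r:ℝ) := by
    have harg : (m - e - b - d) / (r:ℝ) = n * p * (1 - q) / (r:ℝ) := by
      rw [hm, he, hb, hd]; field_simp; ring
    rw [harg, hF, Real.log_div (by positivity) (by positivity),
      Real.log_mul (by positivity) (by positivity),
      Real.log_mul (by positivity) (by positivity)]
  have H10 : F (n - (m + a + 2 * b + d) / r) = (n * ((r:ℝ) - q) * ((r:ℝ) - p) / (r:ℝ)^2) *
      (Real.log n + Real.log ((r:ℝ) - q) + Real.log ((r:ℝ) - p) - 2 * Real.log (r:ℝ))
      - n * ((r:ℝ) - q) * ((r:ℝ) - p) / (r:ℝ)^2 := by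
    have harg : n - (m + a + 2 * b + d) / (r:ℝ) =
        n * ((r:ℝ) - q) * ((r:ℝ) - p) / (r:ℝ)^2 := by
      rw [hm, ha, hb, hd]; field_simp; ring
    rw [harg, hF, Real.log_div (by positivity) (by positivity),
      Real.log_mul (by positivity) (by positivity),
      Real.log_mul (by positivity) (by positivity), Real.log_pow]
    push_cast; ring
  rw [hS, hLM, hLA, hLE, hLB, hLD, hLT, H1, H2, H3, H4, H5, H6, H7, H8, H9, H10]
  field_simp
  ring
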